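/- Let n, c ≥ 2, s ∈ [c-1], c | n, t = sn/c, and s_0 = min{s, c-s}. Then m(n, t, s_0+1; s+1, c-s+1) = (s_0/c)·binom(n,t) and m(n, t, c−s_0+1; s+1, c−s+1) = ((c−s_0)/c)·binom(n,t). -/

import Mathlib

/-- The generalized matching number `m(n,t,λ;k₁,k₂)`. -/
noncomputable def genMatch (n t lam k1 k2 : ℕ) : ℕ :=
  sSup {N | ∃ G : Finset (Finset (Fin n)),
    (∀ S ∈ G, S.card = t) ∧
    (¬ ∃ A : Fin lam → Finset (Fin n), (∀ i, A i ∈ G) ∧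
      (∀ B : Finset (Fin lam), B.card = k1 → B.inf A = ∅) ∧
      (∀ B : Finset (Fin lam), B.card = k2 → B.sup A = Finset.univ)) ∧
    G.card = N}


open Finset

lemma count_val_lt {c : ℕ} [NeZero c] {s : ℕ} (hs : s ≤ c) :
    #(Finset.univ.filter fun y : ZMod c => y.val < s) = s := by
  have h : #(Finset.univ.filter fun y : ZMod c => y.val < s) = #(Finset.range s) := by
    refine Finset.card_nbij' (i := fun y => y.val) (j := fun i => (i : ZMod c)) ?_ ?_ ?_ ?_
    · intro y hy; simp only [Finset.mem_coe, mem_filter] at hy; simpa using hy.2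
    · intro i hi; simp only [Finset.mem_coe, Finset.mem_range] at hi
      simp only [Finset.mem_coe, mem_filter, Finset.mem_univ, true_and]
      rwa [ZMod.val_cast_of_lt (lt_of_lt_of_le hi hs)]
    · intro y _; simp [ZMod.natCast_val]
    · intro i hi; simp only [Finset.mem_coe, Finset.mem_range] at hi
      exact ZMod.val_cast_of_lt (lt_of_lt_of_le hi hs)
  simpa using h

lemma count_sub_window {c : ℕ} [NeZero c] {s : ℕ} (hs : s ≤ c) (a : ZMod c) :
    #(Finset.univ.filter fun j : ZMod c => (a - j).val < s) = s := by
  have h : #(Finset.univ.filter fun j : ZMod c => (a - j).val < s)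
      = #(Finset.univ.filter fun y : ZMod c => y.val < s) := by
    refine Finset.card_nbij' (i := fun j => a - j) (j := fun y => a - y) ?_ ?_ ?_ ?_
    · intro j hj; simp only [Finset.mem_coe, mem_filter] at hj ⊢; exact ⟨Finset.mem_univ _, hj.2⟩
    · intro y hy; simp only [Finset.mem_coe, mem_filter] at hy ⊢
      refine ⟨Finset.mem_univ _, ?_⟩; simpa using hy.2
    · intro j _; ring
    · intro y _; ring
  rw [h, count_val_lt hs]

/-- the `j`-th block set. -/
def blockSet (n c q s : ℕ) (j : ZMod c) : Finset (Fin n) :=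
  Finset.univ.filter fun x => ((((x.val / q : ℕ) : ZMod c)) - j).val < s

lemma col_count {n c q : ℕ} [NeZero c] (hn : n = c * q) (hq : 0 < q) (b : ZMod c) :
    #(Finset.univ.filter fun x : Fin n => ((x.val / q : ℕ) : ZMod c) = b) = q := by
  have hq' : ∀ x : Fin n, x.val / q < c := by
    intro x
    have hx : (x : ℕ) < c * q := by rw [← hn]; exact x.2
    rw [mul_comm] at hx
    exact Nat.div_lt_of_lt_mul hx
  have h : #(Finset.univ.filter fun x : Fin n => ((x.val / q : ℕ) : ZMod c) = b)
      = #(Finset.range q) := by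
    refine Finset.card_nbij' (i := fun x => x.val % q)
      (j := fun r => ⟨b.val * q + r % q, by
        have hb : b.val < c := ZMod.val_lt b
        have h1 : r % q < q := Nat.mod_lt _ hq
        have h3 : (b.val + 1) * q ≤ c * q := Nat.mul_le_mul_right _ (by omega)
        have h4 : b.val * q + r % q < (b.val + 1) * q := by rw [add_mul, one_mul]; omega
        exact lt_of_lt_of_le h4 (le_trans h3 (le_of_eq hn.symm))⟩) ?_ ?_ ?_ ?_
    · intro x _
      simp only [Finset.mem_coe, Finset.mem_range]
      exact Nat.mod_lt _ hq
    · intro r hr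
      simp only [Finset.mem_coe, Finset.mem_range] at hr
      simp only [Finset.mem_coe, mem_filter, Finset.mem_univ, true_and]
      have h1 : (b.val * q + r % q) / q = b.val := by
        rw [Nat.mod_eq_of_lt hr, mul_comm, Nat.mul_add_div hq, Nat.div_eq_of_lt hr, Nat.add_zero]
      rw [h1]
      simp [ZMod.natCast_val]
    · intro x hx
      simp only [Finset.mem_coe, mem_filter, Finset.mem_univ, true_and] at hx
      apply Fin.ext
      have hbv : b.val = x.val / q := by
        rw [← hx, ZMod.val_cast_of_lt (hq' x)]
      show b.val * q + x.val % q % q = x.val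
      have : x.val % q % q = x.val % q := Nat.mod_mod_of_dvd _ dvd_rfl
      rw [this, hbv, Nat.div_add_mod']
    · intro r hr
      simp only [Finset.mem_coe, Finset.mem_range] at hr
      show (b.val * q + r % q) % q = r
      rw [add_comm, Nat.add_mul_mod_self_right, Nat.mod_mod_of_dvd _ dvd_rfl]
      exact Nat.mod_eq_of_lt hr
  simpa using h

lemma count_window {c : ℕ} [NeZero c] {s : ℕ} (hs : s ≤ c) (j : ZMod c) :
    #(Finset.univ.filter fun b : ZMod c => (b - j).val < s) = s := by
  have h : #(Finset.univ.filter fun b : ZMod c => (b - j).val < s)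
      = #(Finset.univ.filter fun y : ZMod c => y.val < s) := by
    refine Finset.card_nbij' (i := fun b => b - j) (j := fun y => y + j) ?_ ?_ ?_ ?_
    · intro b hb; simp only [Finset.mem_coe, mem_filter] at hb ⊢; exact ⟨Finset.mem_univ _, hb.2⟩
    · intro y hy; simp only [Finset.mem_coe, mem_filter] at hy ⊢
      refine ⟨Finset.mem_univ _, ?_⟩; simpa using hy.2
    · intro b _; ring
    · intro y _; ring
  rw [h, count_val_lt hs]

lemma blockSet_card {n c q s : ℕ} [NeZero c] (hn : n = c * q) (hq : 0 < q) (hs : s ≤ c)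
    (j : ZMod c) : #(blockSet n c q s j) = s * q := by
  classical
  have hmem : ∀ x ∈ blockSet n c q s j,
      ((x.val / q : ℕ) : ZMod c) ∈ Finset.univ.filter (fun b : ZMod c => (b - j).val < s) := by
    intro x hx
    simp only [blockSet, mem_filter] at hx ⊢
    exact ⟨Finset.mem_univ _, hx.2⟩
  rw [Finset.card_eq_sum_card_fiberwise hmem]
  have hfib : ∀ b ∈ Finset.univ.filter (fun b : ZMod c => (b - j).val < s),
      #((blockSet n c q s j).filter fun x => ((x.val / q : ℕ) : ZMod c) = b) = q := by
    intro b hb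
    simp only [mem_filter, Finset.mem_univ, true_and] at hb
    have : (blockSet n c q s j).filter (fun x => ((x.val / q : ℕ) : ZMod c) = b)
        = Finset.univ.filter (fun x : Fin n => ((x.val / q : ℕ) : ZMod c) = b) := by
      ext x
      simp only [blockSet, mem_filter, Finset.mem_univ, true_and]
      constructor
      · rintro ⟨_, h2⟩; exact h2
      · intro h; exact ⟨by rw [h]; exact hb, h⟩
    rw [this, col_count hn hq b]
  rw [Finset.sum_congr rfl hfib, Finset.sum_const, count_window hs j, smul_eq_mul]

lemma blockSet_coverage {n c q s : ℕ} [NeZero c] (hs : s ≤ c) (x : Fin n) :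
    #(Finset.univ.filter fun j : ZMod c => x ∈ blockSet n c q s j) = s := by
  have : (Finset.univ.filter fun j : ZMod c => x ∈ blockSet n c q s j)
      = Finset.univ.filter fun j : ZMod c => (((x.val / q : ℕ) : ZMod c) - j).val < s := by
    ext j; simp [blockSet]
  rw [this, count_sub_window hs]

lemma exists_perm_image {n : ℕ} {S S' : Finset (Fin n)} (h : #S = #S') :
    ∃ π : Equiv.Perm (Fin n), S.image π = S' := by
  classical
  have e : (S : Finset (Fin n)) ≃ (S' : Finset (Fin n)) := Finset.equivOfCardEq h
  refine ⟨e.extendSubtype, ?_⟩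
  apply Finset.eq_of_subset_of_card_le
  · intro y hy
    simp only [Finset.mem_image] at hy
    obtain ⟨x, hx, rfl⟩ := hy
    exact e.extendSubtype_mem x hx
  · rw [Finset.card_image_of_injective _ e.extendSubtype.injective, h]

/-- number of permutations mapping `T` onto `S`. -/
noncomputable def permFib {n : ℕ} (T S : Finset (Fin n)) : ℕ :=
  #(Finset.univ.filter fun σ : Equiv.Perm (Fin n) => T.image σ = S)

lemma permFib_symm {n : ℕ} (T S : Finset (Fin n)) : permFib T S = permFib S T := by
  classical
  unfold permFib
  refine Finset.card_nbij' (i := fun σ => σ⁻¹) (j := fun σ => σ⁻¹) ?_ ?_ ?_ ?_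
  · intro σ hσ
    simp only [Finset.mem_coe, mem_filter, Finset.mem_univ, true_and] at hσ ⊢
    rw [← hσ, Finset.image_image]
    have : (⇑σ⁻¹ ∘ ⇑σ) = id := by
      funext x; simp
    rw [this, Finset.image_id]
  · intro σ hσ
    simp only [Finset.mem_coe, mem_filter, Finset.mem_univ, true_and] at hσ ⊢
    rw [← hσ, Finset.image_image]
    have : (⇑σ⁻¹ ∘ ⇑σ) = id := by
      funext x; simp
    rw [this, Finset.image_id]
  · intro σ _; simp
  · intro σ _; simp

lemma permFib_right {n : ℕ} (T S S' : Finset (Fin n)) (h : #S = #S') :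
    permFib T S = permFib T S' := by
  classical
  obtain ⟨π, hπ⟩ := exists_perm_image h
  unfold permFib
  refine Finset.card_nbij' (i := fun σ => σ.trans π) (j := fun σ => σ.trans π⁻¹) ?_ ?_ ?_ ?_
  · intro σ hσ
    simp only [Finset.mem_coe, mem_filter, Finset.mem_univ, true_and] at hσ ⊢
    have : ⇑(σ.trans π) = ⇑π ∘ ⇑σ := rfl
    rw [this, ← Finset.image_image, hσ, hπ]
  · intro σ hσ
    simp only [Finset.mem_coe, mem_filter, Finset.mem_univ, true_and] at hσ ⊢
    have h1 : ⇑(σ.trans π⁻¹) = ⇑π⁻¹ ∘ ⇑σ := rfl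
    rw [h1, ← Finset.image_image, hσ, ← hπ, Finset.image_image]
    have : (⇑π⁻¹ ∘ ⇑π) = id := by funext x; simp
    rw [this, Finset.image_id]
  · intro σ _
    ext x
    simp
  · intro σ _
    ext x
    simp

lemma permFib_eq {n : ℕ} (T T' S S' : Finset (Fin n)) (h1 : #T = #T') (h2 : #S = #S')
    (h3 : #T = #S) : permFib T S = permFib T' S' := by
  calc permFib T S = permFib T T' := permFib_right _ _ _ (h3.symm.trans h1)
    _ = permFib T' T := permFib_symm _ _
    _ = permFib T' S' := permFib_right _ _ _ (h3.trans h2)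


lemma perm_total {n t : ℕ} (T : Finset (Fin n)) (hT : #T = t) :
    #(Finset.univ : Finset (Equiv.Perm (Fin n))) = n.choose t * permFib T T := by
  classical
  have hmem : ∀ σ ∈ (Finset.univ : Finset (Equiv.Perm (Fin n))),
      T.image ⇑σ ∈ Finset.powersetCard t (Finset.univ : Finset (Fin n)) := by
    intro σ _
    rw [Finset.mem_powersetCard]
    exact ⟨Finset.subset_univ _, by rw [Finset.card_image_of_injective _ σ.injective, hT]⟩
  rw [Finset.card_eq_sum_card_fiberwise hmem]
  have hfib : ∀ S ∈ Finset.powersetCard t (Finset.univ : Finset (Fin n)),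
      #((Finset.univ : Finset (Equiv.Perm (Fin n))).filter fun σ : Equiv.Perm (Fin n) => T.image ⇑σ = S)
        = permFib T T := by
    intro S hS
    rw [Finset.mem_powersetCard] at hS
    exact permFib_eq T T S T rfl (hS.2.trans hT.symm) (hT.trans hS.2.symm)
  rw [Finset.sum_congr rfl hfib, Finset.sum_const, smul_eq_mul,
    Finset.card_powersetCard, Finset.card_univ, Fintype.card_fin]

lemma perm_mem_count {n t : ℕ} (T : Finset (Fin n)) (G : Finset (Finset (Fin n)))
    (hT : #T = t) (hG : ∀ S ∈ G, #S = t) :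
    #(Finset.univ.filter fun σ : Equiv.Perm (Fin n) => T.image ⇑σ ∈ G)
      = #G * permFib T T := by
  classical
  have hmem : ∀ σ ∈ Finset.univ.filter (fun σ : Equiv.Perm (Fin n) => T.image ⇑σ ∈ G),
      T.image ⇑σ ∈ G := by
    intro σ hσ
    exact (Finset.mem_filter.mp hσ).2
  rw [Finset.card_eq_sum_card_fiberwise hmem]
  have hfib : ∀ S ∈ G,
      #((Finset.univ.filter fun σ : Equiv.Perm (Fin n) => T.image ⇑σ ∈ G).filter
          fun σ : Equiv.Perm (Fin n) => T.image ⇑σ = S) = permFib T T := by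
    intro S hS
    have : (Finset.univ.filter (fun σ : Equiv.Perm (Fin n) => T.image ⇑σ ∈ G)).filter
          (fun σ : Equiv.Perm (Fin n) => T.image ⇑σ = S)
        = Finset.univ.filter (fun σ : Equiv.Perm (Fin n) => T.image ⇑σ = S) := by
      ext σ
      simp only [Finset.mem_filter, Finset.mem_univ, true_and]
      constructor
      · rintro ⟨_, h⟩; exact h
      · intro h; exact ⟨by rw [h]; exact hS, h⟩
    rw [this]
    exact permFib_eq T T S T rfl ((hG S hS).trans hT.symm) (hT.trans (hG S hS).symm)
  rw [Finset.sum_congr rfl hfib, Finset.sum_const, smul_eq_mul]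

lemma per_perm_bound {n c q s μ : ℕ} [NeZero c] (hq : 0 < q) (hs : s ≤ c)
    (G : Finset (Finset (Fin n)))
    (hnoc : ¬ ∃ A : Fin (μ+1) → Finset (Fin n), (∀ i, A i ∈ G) ∧
      (∀ B : Finset (Fin (μ+1)), B.card = s+1 → B.inf A = ∅) ∧
      (∀ B : Finset (Fin (μ+1)), B.card = c-s+1 → B.sup A = Finset.univ))
    (σ : Equiv.Perm (Fin n)) :
    #(Finset.univ.filter fun j : ZMod c => (blockSet n c q s j).image ⇑σ ∈ G) ≤ μ := by
  classical
  by_contra hcon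
  push_neg at hcon
  obtain ⟨J, hJsub, hJcard⟩ := Finset.exists_subset_card_eq (n := μ+1) hcon
  have hcast : μ + 1 = #J := hJcard.symm
  set jf : Fin (μ+1) → ZMod c := fun i => (J.equivFin.symm (Fin.cast hcast i) : ZMod c) with hjf
  have hjf_mem : ∀ i, jf i ∈ J := fun i => (J.equivFin.symm (Fin.cast hcast i)).2
  have hjf_inj : Function.Injective jf := by
    intro a b hab
    have h1 : J.equivFin.symm (Fin.cast hcast a) = J.equivFin.symm (Fin.cast hcast b) :=
      Subtype.coe_injective hab
    have h2 := J.equivFin.symm.injective h1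
    have h3 : (Fin.cast hcast a).val = (Fin.cast hcast b).val := by rw [h2]
    exact Fin.ext h3
  have hmem_img : ∀ j, ∀ y : Fin n,
      (y ∈ (blockSet n c q s j).image ⇑σ) ↔ σ.symm y ∈ blockSet n c q s j := by
    intro j y
    constructor
    · intro hy
      obtain ⟨x, hx, hxy⟩ := Finset.mem_image.mp hy
      rwa [← hxy, Equiv.symm_apply_apply]
    · intro hy
      exact Finset.mem_image.mpr ⟨σ.symm y, hy, σ.apply_symm_apply y⟩
  set A : Fin (μ+1) → Finset (Fin n) := fun i => (blockSet n c q s (jf i)).image ⇑σ with hA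
  apply hnoc
  refine ⟨A, ?_, ?_, ?_⟩
  · intro i
    have := hJsub (hjf_mem i)
    exact (Finset.mem_filter.mp this).2
  · intro B hB
    rw [Finset.eq_empty_iff_forall_notMem]
    intro y hy
    have hyi : ∀ i ∈ B, y ∈ A i := by
      intro i hi
      exact Finset.mem_of_subset (Finset.inf_le hi) hy
    have himg : B.image jf ⊆ Finset.univ.filter
        (fun j : ZMod c => σ.symm y ∈ blockSet n c q s j) := by
      intro j hj
      obtain ⟨i, hi, rfl⟩ := Finset.mem_image.mp hj
      rw [Finset.mem_filter]
      exact ⟨Finset.mem_univ _, (hmem_img _ y).mp (hyi i hi)⟩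
    have hc1 := Finset.card_le_card himg
    rw [Finset.card_image_of_injective _ hjf_inj, hB, blockSet_coverage hs (σ.symm y)] at hc1
    omega
  · intro B hB
    apply Finset.eq_univ_iff_forall.mpr
    intro y
    by_contra hy
    have hyi : ∀ i ∈ B, y ∉ A i := by
      intro i hi hyA
      exact hy (Finset.mem_sup.mpr ⟨i, hi, hyA⟩)
    have himg : B.image jf ⊆ Finset.univ.filter
        (fun j : ZMod c => ¬ σ.symm y ∈ blockSet n c q s j) := by
      intro j hj
      obtain ⟨i, hi, rfl⟩ := Finset.mem_image.mp hj
      rw [Finset.mem_filter]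
      refine ⟨Finset.mem_univ _, fun hmem => hyi i hi ((hmem_img _ y).mpr hmem)⟩
    have hc1 := Finset.card_le_card himg
    have hc2 : #(Finset.univ.filter (fun j : ZMod c => ¬ σ.symm y ∈ blockSet n c q s j))
        = c - s := by
      have h3 := Finset.card_filter_add_card_filter_not
        (s := (Finset.univ : Finset (ZMod c)))
        (fun j : ZMod c => σ.symm y ∈ blockSet n c q s j)
      rw [blockSet_coverage hs (σ.symm y), Finset.card_univ, ZMod.card] at h3
      omega
    rw [Finset.card_image_of_injective _ hjf_inj, hB, hc2] at hc1
    omega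

lemma upper_bound {n c q s μ : ℕ} [NeZero c] (hn : n = c * q) (hq : 0 < q) (hs : s ≤ c)
    (G : Finset (Finset (Fin n))) (hG : ∀ S ∈ G, #S = s * q)
    (hnoc : ¬ ∃ A : Fin (μ+1) → Finset (Fin n), (∀ i, A i ∈ G) ∧
      (∀ B : Finset (Fin (μ+1)), B.card = s+1 → B.inf A = ∅) ∧
      (∀ B : Finset (Fin (μ+1)), B.card = c-s+1 → B.sup A = Finset.univ)) :
    c * #G ≤ μ * n.choose (s * q) := by
  classical
  set T0 : Finset (Fin n) := blockSet n c q s 0 with hT0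
  set K : ℕ := permFib T0 T0 with hK
  have hbscard : ∀ j : ZMod c, #(blockSet n c q s j) = s * q := fun j => blockSet_card hn hq hs j
  have hKpos : 0 < K := by
    rw [hK]
    apply Finset.card_pos.mpr
    refine ⟨1, ?_⟩
    rw [Finset.mem_filter]
    refine ⟨Finset.mem_univ _, ?_⟩
    rw [Equiv.Perm.coe_one, Finset.image_id]
  -- the double count
  have key : ∑ σ : Equiv.Perm (Fin n),
      #(Finset.univ.filter fun j : ZMod c => (blockSet n c q s j).image ⇑σ ∈ G)
      ≤ μ * (n.choose (s*q) * K) := by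
    calc ∑ σ : Equiv.Perm (Fin n),
        #(Finset.univ.filter fun j : ZMod c => (blockSet n c q s j).image ⇑σ ∈ G)
        ≤ ∑ _σ : Equiv.Perm (Fin n), μ := by
          apply Finset.sum_le_sum
          intro σ _
          exact per_perm_bound hq hs G hnoc σ
      _ = #(Finset.univ : Finset (Equiv.Perm (Fin n))) * μ := by
          rw [Finset.sum_const, smul_eq_mul]
      _ = μ * (n.choose (s*q) * K) := by
          rw [perm_total T0 (hbscard 0), mul_comm]
  have swap : ∑ σ : Equiv.Perm (Fin n),
      #(Finset.univ.filter fun j : ZMod c => (blockSet n c q s j).image ⇑σ ∈ G)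
      = c * (#G * K) := by
    have h1 : ∀ σ : Equiv.Perm (Fin n),
        #(Finset.univ.filter fun j : ZMod c => (blockSet n c q s j).image ⇑σ ∈ G)
        = ∑ j : ZMod c, if (blockSet n c q s j).image ⇑σ ∈ G then 1 else 0 := by
      intro σ
      rw [Finset.card_filter]
    rw [Finset.sum_congr rfl (fun σ _ => h1 σ), Finset.sum_comm]
    have h2 : ∀ j : ZMod c,
        (∑ σ : Equiv.Perm (Fin n), if (blockSet n c q s j).image ⇑σ ∈ G then 1 else 0)
        = #G * K := by
      intro j
      rw [← Finset.card_filter]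
      rw [perm_mem_count (blockSet n c q s j) G (hbscard j) hG]
      congr 1
      exact permFib_eq _ _ _ _ ((hbscard j).trans (hbscard 0).symm)
        ((hbscard j).trans (hbscard 0).symm) rfl
    rw [Finset.sum_congr rfl (fun j _ => h2 j), Finset.sum_const, smul_eq_mul,
      Finset.card_univ, ZMod.card]
  rw [swap] at key
  have : c * #G * K ≤ μ * n.choose (s*q) * K := by
    calc c * #G * K = c * (#G * K) := by ring
      _ ≤ μ * (n.choose (s*q) * K) := key
      _ = μ * n.choose (s*q) * K := by ring
  exact Nat.le_of_mul_le_mul_right this hKpos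

lemma star_noconfig {n lam k2 : ℕ} (x0 : Fin n) (G : Finset (Finset (Fin n)))
    (hstar : ∀ S ∈ G, x0 ∈ S) :
    ¬ ∃ A : Fin lam → Finset (Fin n), (∀ i, A i ∈ G) ∧
      (∀ B : Finset (Fin lam), B.card = lam → B.inf A = ∅) ∧
      (∀ B : Finset (Fin lam), B.card = k2 → B.sup A = Finset.univ) := by
  rintro ⟨A, hAG, hk1, _⟩
  have hB : (Finset.univ : Finset (Fin lam)).card = lam := by
    rw [Finset.card_univ, Fintype.card_fin]
  have hinf := hk1 Finset.univ hB
  have hx : ({x0} : Finset (Fin n)) ≤ Finset.univ.inf A := by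
    apply Finset.le_inf
    intro i _
    exact Finset.singleton_subset_iff.mpr (hstar (A i) (hAG i))
  rw [hinf] at hx
  exact (Finset.notMem_empty x0) (Finset.singleton_subset_iff.mp hx)

lemma costar_noconfig {n lam k1 : ℕ} (x0 : Fin n) (G : Finset (Finset (Fin n)))
    (hcostar : ∀ S ∈ G, x0 ∉ S) :
    ¬ ∃ A : Fin lam → Finset (Fin n), (∀ i, A i ∈ G) ∧
      (∀ B : Finset (Fin lam), B.card = k1 → B.inf A = ∅) ∧
      (∀ B : Finset (Fin lam), B.card = lam → B.sup A = Finset.univ) := by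
  rintro ⟨A, hAG, _, hk2⟩
  have hB : (Finset.univ : Finset (Fin lam)).card = lam := by
    rw [Finset.card_univ, Fintype.card_fin]
  have hsup := hk2 Finset.univ hB
  have hx : x0 ∈ Finset.univ.sup A := by rw [hsup]; exact Finset.mem_univ x0
  obtain ⟨i, _, hxi⟩ := Finset.mem_sup.mp hx
  exact hcostar (A i) (hAG i) hxi

lemma choose_id1 {n t : ℕ} (hn : 1 ≤ n) (ht : 1 ≤ t) :
    n * ((n-1).choose (t-1)) = t * n.choose t := by
  have h := Nat.add_one_mul_choose_eq (n-1) (t-1)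
  have h1 : n - 1 + 1 = n := by omega
  have h2 : t - 1 + 1 = t := by omega
  rw [h1, h2] at h
  rw [h, mul_comm]

lemma choose_id2 {n t : ℕ} (hn : 1 ≤ n) (ht : 1 ≤ t) (htn : t ≤ n) :
    n * ((n-1).choose t) = (n - t) * n.choose t := by
  have hrec : n.choose t = (n-1).choose (t-1) + (n-1).choose t := by
    have h := Nat.choose_succ_succ (n-1) (t-1)
    have h1 : Nat.succ (n - 1) = n := by omega
    have h2 : Nat.succ (t - 1) = t := by omega
    rwa [h1, h2] at h
  have h4 : n * ((n-1).choose t) + t * n.choose t = n * n.choose t := by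
    rw [← choose_id1 hn ht, ← Nat.mul_add, Nat.add_comm ((n-1).choose t), ← hrec]
  have h5 : (n - t) * n.choose t + t * n.choose t = n * n.choose t := by
    rw [← Nat.add_mul, Nat.sub_add_cancel htn]
  omega

lemma costar_fam {n t : ℕ} (x0 : Fin n) :
    (∀ S ∈ (Finset.univ.erase x0).powersetCard t, #S = t) ∧
    (∀ S ∈ (Finset.univ.erase x0).powersetCard t, x0 ∉ S) ∧
    #((Finset.univ.erase x0).powersetCard t) = (n-1).choose t := by
  refine ⟨?_, ?_, ?_⟩
  · intro S hS
    exact (Finset.mem_powersetCard.mp hS).2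
  · intro S hS hx
    have := (Finset.mem_powersetCard.mp hS).1 hx
    simp at this
  · rw [Finset.card_powersetCard, Finset.card_erase_of_mem (Finset.mem_univ x0),
      Finset.card_univ, Fintype.card_fin]

lemma star_fam {n t : ℕ} (x0 : Fin n) (ht : 1 ≤ t) :
    (∀ S ∈ ((Finset.univ.erase x0).powersetCard (t-1)).image (insert x0), #S = t) ∧
    (∀ S ∈ ((Finset.univ.erase x0).powersetCard (t-1)).image (insert x0), x0 ∈ S) ∧
    #(((Finset.univ.erase x0).powersetCard (t-1)).image (insert x0)) = (n-1).choose (t-1) := by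
  have hnotmem : ∀ S ∈ (Finset.univ.erase x0).powersetCard (t-1), x0 ∉ S := by
    intro S hS hx
    have := (Finset.mem_powersetCard.mp hS).1 hx
    simp at this
  refine ⟨?_, ?_, ?_⟩
  · intro S hS
    obtain ⟨S', hS', rfl⟩ := Finset.mem_image.mp hS
    rw [Finset.card_insert_of_notMem (hnotmem S' hS'), (Finset.mem_powersetCard.mp hS').2]
    omega
  · intro S hS
    obtain ⟨S', _, rfl⟩ := Finset.mem_image.mp hS
    exact Finset.mem_insert_self x0 S'
  · rw [Finset.card_image_of_injOn, Finset.card_powersetCard,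
      Finset.card_erase_of_mem (Finset.mem_univ x0), Finset.card_univ, Fintype.card_fin]
    intro S hS S' hS' heq
    have h1 : x0 ∉ S := hnotmem S (by simpa using hS)
    have h2 : x0 ∉ S' := hnotmem S' (by simpa using hS')
    rw [← Finset.erase_insert h1, ← Finset.erase_insert h2, heq]


lemma main_case {n c s q μ : ℕ} (hq : 1 ≤ q) (hc : 2 ≤ c) (hs1 : 1 ≤ s) (hsc : s ≤ c - 1)
    (hn : n = c * q) (hμ : μ = s ∨ μ = c - s) :
    c * genMatch n (s * q) (μ + 1) (s + 1) (c - s + 1) = μ * n.choose (s * q) := by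
  classical
  haveI : NeZero c := ⟨by omega⟩
  have hnpos : 0 < n := by
    have : 2 * 1 ≤ c * q := Nat.mul_le_mul hc hq
    omega
  have htpos : 1 ≤ s * q := by
    have : 1 * 1 ≤ s * q := Nat.mul_le_mul hs1 hq
    omega
  have hsc' : s ≤ c := by omega
  have htn : s * q ≤ n := by rw [hn]; exact Nat.mul_le_mul_right q hsc'
  set t := s * q with htdef
  set x0 : Fin n := ⟨0, hnpos⟩ with hx0
  -- choose the construction according to the case
  obtain ⟨G0, N0, hGunif, hGx, hGcard, hGnoc, hkey⟩ :
      ∃ (G0 : Finset (Finset (Fin n))) (N0 : ℕ),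
        (∀ S ∈ G0, #S = t) ∧ True ∧ #G0 = N0 ∧
        (¬ ∃ A : Fin (μ+1) → Finset (Fin n), (∀ i, A i ∈ G0) ∧
          (∀ B : Finset (Fin (μ+1)), B.card = s+1 → B.inf A = ∅) ∧
          (∀ B : Finset (Fin (μ+1)), B.card = c-s+1 → B.sup A = Finset.univ)) ∧
        c * N0 = μ * n.choose t := by
    rcases hμ with hμ | hμ
    · -- μ = s : star family
      subst hμ
      refine ⟨((Finset.univ.erase x0).powersetCard (t-1)).image (insert x0),
        (n-1).choose (t-1), (star_fam x0 htpos).1, trivial, (star_fam x0 htpos).2.2, ?_, ?_⟩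
      · exact star_noconfig x0 _ (star_fam x0 htpos).2.1
      · -- c * (n-1).choose (t-1) = s * n.choose t
        apply Nat.eq_of_mul_eq_mul_left hnpos
        calc n * (c * (n-1).choose (t-1)) = c * (n * (n-1).choose (t-1)) := by ring
          _ = c * (t * n.choose t) := by rw [choose_id1 (by omega) htpos]
          _ = (c * (μ * q)) * n.choose t := by rw [htdef]; ring
          _ = (μ * (c * q)) * n.choose t := by ring
          _ = n * (μ * n.choose t) := by rw [← hn]; ring
    · -- μ = c - s : co-star family
      subst hμ
      refine ⟨(Finset.univ.erase x0).powersetCard t, (n-1).choose t,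
        (costar_fam x0).1, trivial, (costar_fam x0).2.2, ?_, ?_⟩
      · exact costar_noconfig x0 _ (costar_fam x0).2.1
      · apply Nat.eq_of_mul_eq_mul_left hnpos
        have hnt : n - t = (c - s) * q := by
          rw [hn, htdef, Nat.sub_mul]
        calc n * (c * (n-1).choose t) = c * (n * (n-1).choose t) := by ring
          _ = c * ((n - t) * n.choose t) := by rw [choose_id2 (by omega) htpos htn]
          _ = (c * ((c - s) * q)) * n.choose t := by rw [hnt]; ring
          _ = ((c - s) * (c * q)) * n.choose t := by ring_nf
          _ = n * ((c - s) * n.choose t) := by rw [← hn]; ring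
  -- genMatch equals N0
  have hgm : genMatch n t (μ + 1) (s + 1) (c - s + 1) = N0 := by
    unfold genMatch
    apply IsGreatest.csSup_eq
    constructor
    · exact ⟨G0, hGunif, hGnoc, hGcard⟩
    · rintro N ⟨G, hGa, hGb, hGc⟩
      have hub := upper_bound hn (by omega) hsc' G hGa hGb
      rw [hGc] at hub
      have h2 : c * N ≤ c * N0 := by rw [hkey, htdef]; exact hub
      exact Nat.le_of_mul_le_mul_left h2 (by omega)
  rw [hgm, hkey]

/-- For n, c ≥ 2, s ∈ [c-1], c ∣ n, t = sn/c and s₀ = min{s, c-s}: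
m(n,t,s₀+1;s+1,c-s+1) = (s₀/c)·binom(n,t) and
m(n,t,c-s₀+1;s+1,c-s+1) = ((c-s₀)/c)·binom(n,t). -/
theorem stmt16 (n c s t : ℕ) (hn : 2 ≤ n) (hc : 2 ≤ c) (hs1 : 1 ≤ s)
    (hs2 : s ≤ c - 1) (hdvd : c ∣ n) (ht : t = s * n / c) :
    c * genMatch n t (min s (c - s) + 1) (s + 1) (c - s + 1) =
      min s (c - s) * Nat.choose n t ∧
    c * genMatch n t (c - min s (c - s) + 1) (s + 1) (c - s + 1) =
      (c - min s (c - s)) * Nat.choose n t := by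
  have hn' : n = c * (n / c) := (Nat.mul_div_cancel' hdvd).symm
  set q := n / c with hqdef
  have hq1 : 1 ≤ q := by
    rcases Nat.eq_zero_or_pos q with h | h
    · rw [h, mul_zero] at hn'; omega
    · exact h
  have ht' : t = s * q := by
    rw [ht, hn', show s * (c * q) = c * (s * q) by ring, Nat.mul_div_cancel_left _ (by omega : 0 < c)]
  constructor
  · rw [ht']
    exact main_case hq1 hc hs1 hs2 hn' (by omega)
  · rw [ht']
    exact main_case hq1 hc hs1 hs2 hn' (by omega)
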